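/- arXiv:2512.21198 — 4 statements merged into one kernel-verified Lean document; each statement's English description precedes it below -/
import Mathlib

section
/- Let q, n ≥ 1, H ∈ ℝ^{q×n}, h ∈ ℝ^q, r ∈ ℝ^q, λ ∈ ℝ, and M ∈ ℝ^{n×n}. Suppose there exists an entrywise nonnegative matrix P ∈ ℝ^{q×q} such that P·H = H·M and P·h ≤ λ·h − r componentwise. Then for every e ∈ ℝⁿ with H·e ≤ h componentwise and every d ∈ ℝⁿ with H·d ≤ r componentwise, one has H·(M·e + d) ≤ λ·h componentwise, i.e., M·e + d ∈ P(H, λh). If moreover 0 < λ ≤ 1 and h ≥ 0 componentwise, then also M·e + d ∈ P(H, h). -/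
/-- A nonnegative dual matrix `P` with `P·H = H·M` and
`P·h ≤ λ·h − r` certifies that the polytope `P(H,h)` is mapped into
`P(H, λh)` by the perturbed dynamics `e ↦ M·e + d` for any `d` with
`H·d ≤ r`; if moreover `0 < λ ≤ 1` and `h ≥ 0`, the image stays in `P(H,h)`. -/
theorem stmt_0 (q n : ℕ) (hq : 1 ≤ q) (hn : 1 ≤ n)
    (H : Matrix (Fin q) (Fin n) ℝ) (h r : Fin q → ℝ) (lam : ℝ)
    (M : Matrix (Fin n) (Fin n) ℝ) (P : Matrix (Fin q) (Fin q) ℝ)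
    (hP : ∀ i j, 0 ≤ P i j)
    (hPH : P * H = H * M)
    (hPh : ∀ j, P.mulVec h j ≤ lam * h j - r j) :
    (∀ e d : Fin n → ℝ, (∀ j, H.mulVec e j ≤ h j) → (∀ j, H.mulVec d j ≤ r j) →
        ∀ j, H.mulVec (M.mulVec e + d) j ≤ lam * h j) ∧
    (0 < lam → lam ≤ 1 → (∀ j, 0 ≤ h j) →
      ∀ e d : Fin n → ℝ, (∀ j, H.mulVec e j ≤ h j) → (∀ j, H.mulVec d j ≤ r j) →
        ∀ j, H.mulVec (M.mulVec e + d) j ≤ h j) := by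
  have key : ∀ e d : Fin n → ℝ, (∀ j, H.mulVec e j ≤ h j) → (∀ j, H.mulVec d j ≤ r j) →
      ∀ j, H.mulVec (M.mulVec e + d) j ≤ lam * h j := by
    intro e d he hd j
    have h1 : H.mulVec (M.mulVec e + d) j = P.mulVec (H.mulVec e) j + H.mulVec d j := by
      rw [Matrix.mulVec_add, Pi.add_apply, Matrix.mulVec_mulVec, ← hPH, ← Matrix.mulVec_mulVec]
    have h2 : P.mulVec (H.mulVec e) j ≤ P.mulVec h j := by
      simp only [Matrix.mulVec, dotProduct]
      exact Finset.sum_le_sum fun i _ => mul_le_mul_of_nonneg_left (he i) (hP j i)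
    have := hPh j
    have := hd j
    linarith [h1, h2]
  refine ⟨key, fun hl0 hl1 hh e d he hd j => ?_⟩
  have := key e d he hd j
  nlinarith [hh j]
end

section
/- Let n, m ≥ 1, Ā ∈ ℝ^{n×n}, B̄ ∈ ℝ^{n×m}, let X, E, E' ⊆ ℝⁿ and U, F, F' ⊆ ℝ^m be sets with E' ⊆ E and F' ⊆ F, let T ⊆ ℝⁿ, and let N ≥ 1. Assume the terminal conditions: for every x ∈ T, (i) {x} + E' ⊆ X (Minkowski sum), and (ii) there exists u ∈ ℝ^m with {u} + F' ⊆ U and Ā·x + B̄·u ∈ T. Suppose there exist x̄ : {0,…,N} → ℝⁿ and ū : {0,…,N−1} → ℝ^m satisfying x̄(k+1) = Ā·x̄(k) + B̄·ū(k), {x̄(k)} + E ⊆ X, and {ū(k)} + F ⊆ U for all 0 ≤ k ≤ N−1, and x̄(N) ∈ T. Then there exist x̃ : {0,…,N} → ℝⁿ and ũ : {0,…,N−1} → ℝ^m with x̃(0) = x̄(1), x̃(k+1) = Ā·x̃(k) + B̄·ũ(k), {x̃(k)} + E' ⊆ X and {ũ(k)} + F' ⊆ U for all 0 ≤ k ≤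 N−1, and x̃(N) ∈ T. -/
open Pointwise

/-- recursive feasibility induction step of the elastic
tube-based MPC: feasibility of the tightened constraints at one time step,
with an invariant terminal set satisfying the tightened constraints and
nested tubes `E' ⊆ E`, `F' ⊆ F`, implies feasibility at the next step via the
shifted candidate trajectory. -/
theorem stmt_3 (n m : ℕ) (hn : 1 ≤ n) (hm : 1 ≤ m)
    (Abar : Matrix (Fin n) (Fin n) ℝ) (Bbar : Matrix (Fin n) (Fin m) ℝ)
    (X E E' : Set (Fin n → ℝ)) (U F F' : Set (Fin m → ℝ))
    (hE : E' ⊆ E) (hF : F' ⊆ F)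
    (T : Set (Fin n → ℝ)) (N : ℕ) (hN : 1 ≤ N)
    (hterm : ∀ x ∈ T, ({x} + E' ⊆ X) ∧
      ∃ u : Fin m → ℝ, ({u} + F' ⊆ U) ∧
        Abar.mulVec x + Bbar.mulVec u ∈ T)
    (xbar : ℕ → Fin n → ℝ) (ubar : ℕ → Fin m → ℝ)
    (hdyn : ∀ k, k ≤ N - 1 → xbar (k + 1) = Abar.mulVec (xbar k) + Bbar.mulVec (ubar k))
    (hX : ∀ k, k ≤ N - 1 → {xbar k} + E ⊆ X)
    (hU : ∀ k, k ≤ N - 1 → {ubar k} + F ⊆ U)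
    (hT : xbar N ∈ T) :
    ∃ (xt : ℕ → Fin n → ℝ) (ut : ℕ → Fin m → ℝ),
      xt 0 = xbar 1 ∧
      (∀ k, k ≤ N - 1 → xt (k + 1) = Abar.mulVec (xt k) + Bbar.mulVec (ut k)) ∧
      (∀ k, k ≤ N - 1 → {xt k} + E' ⊆ X) ∧
      (∀ k, k ≤ N - 1 → {ut k} + F' ⊆ U) ∧
      xt N ∈ T := by
  obtain ⟨hEX, u, huU, huT⟩ := hterm (xbar N) hT
  refine ⟨fun k => if k ≤ N - 1 then xbar (k + 1)
      else Abar.mulVec (xbar N) + Bbar.mulVec u,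
    fun k => if k = N - 1 then u else ubar (k + 1), ?_, ?_, ?_, ?_, ?_⟩
  · simp [Nat.one_le_iff_ne_zero.mp hN, Nat.sub_pos_of_lt]
  · intro k hk
    rcases eq_or_lt_of_le hk with h | h
    · have h1 : ¬ (k + 1 ≤ N - 1) := by omega
      have h2 : k + 1 = N := by omega
      have h3 : N - 1 + 1 = N := by omega
      simp [hk, h1, h, h2, h3]
      intro hc
      omega
    · have h1 : k + 1 ≤ N - 1 := by omega
      have h2 : k ≠ N - 1 := by omega
      simp [hk, h1, h2]
      exact hdyn (k + 1) h1
  · intro k hk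
    rcases eq_or_lt_of_le hk with h | h
    · have h2 : k + 1 = N := by omega
      simpa [hk, h2] using hEX
    · have h1 : k + 1 ≤ N - 1 := by omega
      simp only [hk, if_pos]
      exact (Set.add_subset_add_left hE).trans (hX (k + 1) h1)
  · intro k hk
    rcases eq_or_lt_of_le hk with h | h
    · simpa [h] using huU
    · have h1 : k + 1 ≤ N - 1 := by omega
      have h2 : k ≠ N - 1 := by omega
      simp only [h2, if_neg, ne_eq, not_false_iff]
      exact (Set.add_subset_add_left hF).trans (hU (k + 1) h1)
  · have : ¬ (N ≤ N - 1) := by omega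
    simpa [this] using huT
end

section
/- Let q, n ≥ 1, H ∈ ℝ^{q×n}, h ∈ ℝ^q with h_j > 0 for every j, and define V(e) := max_{1 ≤ j ≤ q} (H·e)_j / h_j. Let M ∈ ℝ^{n×n}, λ ∈ ℝ, and suppose there exists an entrywise nonnegative P ∈ ℝ^{q×q} with P·H = H·M and P·h ≤ λ·h componentwise. Then for every e ∈ ℝⁿ with V(e) ≥ 0, one has V(M·e) ≤ λ·V(e). -/
/-- The gauge `V(e) = max_j (H·e)_j / h_j` of the polyhedron `P(H,h)`. -/
noncomputable def polyGauge {q n : ℕ} (hq : 0 < q)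
    (H : Matrix (Fin q) (Fin n) ℝ) (h : Fin q → ℝ) (e : Fin n → ℝ) : ℝ :=
  Finset.univ.sup' ⟨⟨0, hq⟩, Finset.mem_univ _⟩ fun j => H.mulVec e j / h j

/-- one-step Lyapunov decrease from the dual certificate:
if `P ≥ 0`, `P·H = H·M` and `P·h ≤ λ·h`, then `V(M·e) ≤ λ·V(e)` whenever
`V(e) ≥ 0`. -/
theorem stmt_5 (q n : ℕ) (hq : 1 ≤ q) (hn : 1 ≤ n)
    (H : Matrix (Fin q) (Fin n) ℝ) (h : Fin q → ℝ) (hh : ∀ j, 0 < h j)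
    (M : Matrix (Fin n) (Fin n) ℝ) (lam : ℝ)
    (P : Matrix (Fin q) (Fin q) ℝ)
    (hP : ∀ i j, 0 ≤ P i j)
    (hPH : P * H = H * M)
    (hPh : ∀ j, P.mulVec h j ≤ lam * h j) :
    ∀ e : Fin n → ℝ, 0 ≤ polyGauge hq H h e →
      polyGauge hq H h (M.mulVec e) ≤ lam * polyGauge hq H h e := by
  intro e hV
  set V := polyGauge hq H h e with hVdef
  have hle : ∀ j, H.mulVec e j ≤ V * h j := by
    intro j
    have h2 : H.mulVec e j / h j ≤ V :=
      Finset.le_sup' (fun j => H.mulVec e j / h j) (Finset.mem_univ j)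
    rw [div_le_iff₀ (hh j)] at h2
    linarith
  apply Finset.sup'_le
  intro i _
  rw [div_le_iff₀ (hh i)]
  have key : H.mulVec (M.mulVec e) i = P.mulVec (H.mulVec e) i := by
    rw [Matrix.mulVec_mulVec, ← hPH, ← Matrix.mulVec_mulVec]
  rw [key]
  have step1 : P.mulVec (H.mulVec e) i ≤ V * P.mulVec h i := by
    rw [Matrix.mulVec, dotProduct, Matrix.mulVec, dotProduct,
      Finset.mul_sum]
    apply Finset.sum_le_sum
    intro j _
    calc P i j * H.mulVec e j ≤ P i j * (V * h j) :=
          mul_le_mul_of_nonneg_left (hle j) (hP i j)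
      _ = V * (P i j * h j) := by ring
  have step2 : V * P.mulVec h i ≤ V * (lam * h i) :=
    mul_le_mul_of_nonneg_left (hPh i) hV
  linarith
end

section
/- Let q, n ≥ 1, H ∈ ℝ^{q×n}, h ∈ ℝ^q with h_j > 0 for every j, suppose P(H,h) is bounded, and define V(e) := max_{1 ≤ j ≤ q} (H·e)_j / h_j. Let M : ℕ → ℝ^{n×n} and λ : ℕ → ℝ with 0 < λ(t) < 1 for all t, and suppose for every t there exists an entrywise nonnegative P(t) ∈ ℝ^{q×q} with P(t)·H = H·M(t) and P(t)·h ≤ λ(t)·h componentwise. Let λ̄ ∈ (0,1) satisfy λ(t) ≤ λ̄ for all t. If e : ℕ → ℝⁿ satisfies e(t+1) = M(t)·e(t) for all t, then for every t ∈ ℕ: V(e(t)) ≤ (∏_{k=0}^{t−1} λ(k))·V(e(0)) ≤ λ̄^t · V(e(0)). In particular V(e(t)) decays exponentially to zero. -/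
lemma polyGauge_nonneg {q n : ℕ} (hq : 0 < q)
    (H : Matrix (Fin q) (Fin n) ℝ) (h : Fin q → ℝ) (hh : ∀ j, 0 < h j)
    (hbdd : Bornology.IsBounded {e : Fin n → ℝ | ∀ j, H.mulVec e j ≤ h j})
    (e : Fin n → ℝ) : 0 ≤ polyGauge hq H h e := by
  by_contra hneg
  push_neg at hneg
  have hall : ∀ j, H.mulVec e j < 0 := by
    intro j
    have hj : H.mulVec e j / h j ≤ polyGauge hq H h e := by
      unfold polyGauge; exact Finset.le_sup' (fun j => H.mulVec e j / h j) (Finset.mem_univ j)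
    have := lt_of_le_of_lt hj hneg
    rcases div_neg_iff.mp this with ⟨_, h2⟩ | ⟨h1, _⟩
    · linarith [hh j]
    · exact h1
  have hne : e ≠ 0 := by
    intro h0
    have := hall ⟨0, hq⟩
    rw [h0, Matrix.mulVec_zero] at this
    exact lt_irrefl _ this
  obtain ⟨R, hR⟩ := hbdd.subset_closedBall 0
  have hnorm : 0 < ‖e‖ := norm_pos_iff.mpr hne
  set c : ℝ := (|R| + 1) / ‖e‖ with hc
  have hcpos : 0 < c := by positivity
  have hmem : c • e ∈ {e : Fin n → ℝ | ∀ j, H.mulVec e j ≤ h j} := by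
    intro j
    rw [Matrix.mulVec_smul]
    have : c * H.mulVec e j < 0 := mul_neg_of_pos_of_neg hcpos (hall j)
    exact le_of_lt (lt_trans this (hh j))
  have := hR hmem
  rw [Metric.mem_closedBall, dist_zero_right, norm_smul, Real.norm_eq_abs,
    abs_of_pos hcpos, hc, div_mul_cancel₀ _ (ne_of_gt hnorm)] at this
  linarith [abs_nonneg R, le_abs_self R]

lemma polyGauge_contract {q n : ℕ} (hq : 0 < q)
    (H : Matrix (Fin q) (Fin n) ℝ) (h : Fin q → ℝ) (hh : ∀ j, 0 < h j)
    (M : Matrix (Fin n) (Fin n) ℝ) (lam : ℝ)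
    (P : Matrix (Fin q) (Fin q) ℝ) (hP : ∀ i j, 0 ≤ P i j)
    (hPH : P * H = H * M) (hPh : ∀ j, P.mulVec h j ≤ lam * h j)
    (e : Fin n → ℝ) (hV : 0 ≤ polyGauge hq H h e) :
    polyGauge hq H h (M.mulVec e) ≤ lam * polyGauge hq H h e := by
  set V := polyGauge hq H h e with hVdef
  apply Finset.sup'_le
  intro j _
  have key : H.mulVec (M.mulVec e) j ≤ lam * h j * V := by
    have h1 : H.mulVec (M.mulVec e) = P.mulVec (H.mulVec e) := by
      rw [Matrix.mulVec_mulVec, Matrix.mulVec_mulVec, hPH]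
    rw [h1]
    have h2 : ∀ i, H.mulVec e i ≤ h i * V := by
      intro i
      have : H.mulVec e i / h i ≤ V := by
        rw [hVdef]; unfold polyGauge; exact Finset.le_sup' (fun i => H.mulVec e i / h i) (Finset.mem_univ i)
      calc H.mulVec e i = (H.mulVec e i / h i) * h i := by
            rw [div_mul_cancel₀ _ (hh i).ne']
        _ ≤ V * h i := mul_le_mul_of_nonneg_right this (hh i).le
        _ = h i * V := mul_comm _ _
    calc P.mulVec (H.mulVec e) j = ∑ i, P j i * H.mulVec e i := rfl
      _ ≤ ∑ i, P j i * (h i * V) := by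
          apply Finset.sum_le_sum
          intro i _
          exact mul_le_mul_of_nonneg_left (h2 i) (hP j i)
      _ = (∑ i, P j i * h i) * V := by rw [Finset.sum_mul]; congr 1; ext i; ring
      _ = P.mulVec h j * V := rfl
      _ ≤ lam * h j * V := mul_le_mul_of_nonneg_right (hPh j) hV
  rw [div_le_iff₀ (hh j)]
  calc H.mulVec (M.mulVec e) j ≤ lam * h j * V := key
    _ = lam * V * h j := by ring

/-- disturbance-free case of Theorem 3: along the switched
closed-loop error dynamics `e(t+1) = M(t)·e(t)`, certified by entrywise
nonnegative dual matrices, the polyhedral Lyapunov function decays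
exponentially with rate bounded by the worst-case contraction factor. -/
theorem stmt_6 (q n : ℕ) (hq : 1 ≤ q) (hn : 1 ≤ n)
    (H : Matrix (Fin q) (Fin n) ℝ) (h : Fin q → ℝ) (hh : ∀ j, 0 < h j)
    (hbdd : Bornology.IsBounded {e : Fin n → ℝ | ∀ j, H.mulVec e j ≤ h j})
    (M : ℕ → Matrix (Fin n) (Fin n) ℝ) (lam : ℕ → ℝ)
    (hlam : ∀ t, 0 < lam t ∧ lam t < 1)
    (hdual : ∀ t, ∃ P : Matrix (Fin q) (Fin q) ℝ,
      (∀ i j, 0 ≤ P i j) ∧ P * H = H * (M t) ∧ ∀ j, P.mulVec h j ≤ lam t * h j)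
    (lambar : ℝ) (hlambar : 0 < lambar ∧ lambar < 1)
    (hle : ∀ t, lam t ≤ lambar)
    (e : ℕ → Fin n → ℝ)
    (hdyn : ∀ t, e (t + 1) = (M t).mulVec (e t)) :
    ∀ t : ℕ,
      polyGauge hq H h (e t) ≤
        (∏ k ∈ Finset.range t, lam k) * polyGauge hq H h (e 0) ∧
      (∏ k ∈ Finset.range t, lam k) * polyGauge hq H h (e 0) ≤
        lambar ^ t * polyGauge hq H h (e 0) := by
  have hVnn : ∀ t, 0 ≤ polyGauge hq H h (e t) :=
    fun t => polyGauge_nonneg hq H h hh hbdd (e t)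
  have hprodnn : ∀ t, 0 ≤ ∏ k ∈ Finset.range t, lam k :=
    fun t => Finset.prod_nonneg fun k _ => (hlam k).1.le
  intro t
  induction t with
  | zero => simp
  | succ t ih =>
    obtain ⟨P, hP, hPH, hPh⟩ := hdual t
    have step : polyGauge hq H h (e (t + 1)) ≤ lam t * polyGauge hq H h (e t) := by
      rw [hdyn t]
      exact polyGauge_contract hq H h hh (M t) (lam t) P hP hPH hPh (e t) (hVnn t)
    constructor
    · calc polyGauge hq H h (e (t + 1)) ≤ lam t * polyGauge hq H h (e t) := step
        _ ≤ lam t * ((∏ k ∈ Finset.range t, lam k) * polyGauge hq H h (e 0)) :=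
            mul_le_mul_of_nonneg_left ih.1 (hlam t).1.le
        _ = (∏ k ∈ Finset.range (t + 1), lam k) * polyGauge hq H h (e 0) := by
            rw [Finset.prod_range_succ]; ring
    · rw [Finset.prod_range_succ, pow_succ]
      calc (∏ k ∈ Finset.range t, lam k) * lam t * polyGauge hq H h (e 0)
          = lam t * ((∏ k ∈ Finset.range t, lam k) * polyGauge hq H h (e 0)) := by ring
        _ ≤ lam t * (lambar ^ t * polyGauge hq H h (e 0)) :=
            mul_le_mul_of_nonneg_left ih.2 (hlam t).1.le
        _ ≤ lambar * (lambar ^ t * polyGauge hq H h (e 0)) :=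
            mul_le_mul_of_nonneg_right (hle t) (mul_nonneg (pow_nonneg hlambar.1.le t) (hVnn 0))
        _ = lambar ^ t * lambar * polyGauge hq H h (e 0) := by ring
end
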